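/- The extension operator E: PC → L²(∂Ω), E(Ṽ) = P_*[∑_m (V_m/H^{N-1}(e_m)) χ_{ẽ_m}] where V = Φ^{-1}(Ṽ) and P_* subtracts the mean over ∂Ω, has operator norm at most θ^{1/2}. -/

import Mathlib

open MeasureTheory

/-- The function `Φ(V) = ∑_m (V_m / H^{N-1}(e_m)) χ_{e_m}`, identifying `ℝ^M`
with `PC ⊂ L²(∂Ω)`. -/
noncomputable def elecFun {X : Type*} [MeasurableSpace X] (ν : Measure X) {M : ℕ}
    (e : Fin M → Set X) (I : Fin M → ℝ) : X → ℝ :=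
  fun x => ∑ m, Set.indicator (e m) (fun _ => I m / (ν (e m)).toReal) x

/-- The extension `E(Ṽ) = P_*[∑_m (V_m/H^{N-1}(e_m)) χ_{ẽ_m}]` where `V = Φ⁻¹(Ṽ)`
and `P_*` is the orthogonal projection subtracting the mean over `∂Ω`. -/
noncomputable def extFun {X : Type*} [MeasurableSpace X] (ν : Measure X) {M : ℕ}
    (e et : Fin M → Set X) (V : Fin M → ℝ) : X → ℝ :=
  fun x => (∑ m, Set.indicator (et m) (fun _ => V m / (ν (e m)).toReal) x) -
    (∫ y, (∑ m, Set.indicator (et m) (fun _ => V m / (ν (e m)).toReal) y) ∂ν) /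
      (ν Set.univ).toReal

lemma sq_sum_ind {X : Type*} {M : ℕ} (s : Fin M → Set X)
    (hd : Pairwise (Function.onFun Disjoint s)) (a : Fin M → ℝ) (x : X) :
    (∑ m, (s m).indicator (fun _ => a m) x) ^ 2
      = ∑ m, (s m).indicator (fun _ => (a m) ^ 2) x := by
  by_cases h : ∃ m, x ∈ s m
  · obtain ⟨m₀, hm₀⟩ := h
    have key : ∀ b : Fin M → ℝ,
        (∑ m, (s m).indicator (fun _ => b m) x) = b m₀ := by
      intro b
      rw [Finset.sum_eq_single m₀]
      · simp [Set.indicator_of_mem hm₀]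
      · intro n _ hn
        exact Set.indicator_of_notMem
          (fun hx => (Set.disjoint_left.mp (hd hn) hx) hm₀) _
      · simp
    rw [key a, key (fun m => a m ^ 2)]
  · push_neg at h
    simp [Set.indicator_of_notMem (h _)]

lemma toReal_eLpNorm_two {X : Type*} [MeasurableSpace X] {ν : Measure X}
    {f : X → ℝ} (hf : MemLp f 2 ν) :
    (eLpNorm f 2 ν).toReal = Real.sqrt (∫ x, (f x) ^ 2 ∂ν) := by
  rw [hf.eLpNorm_eq_integral_rpow_norm two_ne_zero ENNReal.ofNat_ne_top]
  have h1 : ∀ x, ‖f x‖ ^ ((2 : ENNReal).toReal) = (f x) ^ 2 := by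
    intro x
    rw [ENNReal.toReal_ofNat]
    rw [show ((2:ℝ) : ℝ) = ((2:ℕ) : ℝ) by norm_num, Real.rpow_natCast]
    rw [Real.norm_eq_abs, sq_abs]
  simp_rw [h1]
  rw [ENNReal.toReal_ofReal (by positivity)]
  rw [Real.sqrt_eq_rpow]
  norm_num

/-- The extension operator `E : PC → L²(∂Ω)` has operator norm at most `θ^{1/2}`:
for every `Ṽ = Φ(V) ∈ PC`, `‖E(Ṽ)‖_{L²(∂Ω)} ≤ θ^{1/2} ‖Ṽ‖_{L²(∂Ω)}`. -/
theorem stmt_5 {X : Type*} [MeasurableSpace X] (ν : Measure X) [IsFiniteMeasure ν]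
    (M : ℕ) (hM : 1 ≤ M)
    (e et : Fin M → Set X)
    (hmeas : ∀ m, MeasurableSet (e m)) (hmeas' : ∀ m, MeasurableSet (et m))
    (hsub : ∀ m, e m ⊆ et m)
    (hdisj : Pairwise (Function.onFun Disjoint e))
    (hdisj' : Pairwise (Function.onFun Disjoint et))
    (hcover : ν (Set.univ \ ⋃ m, et m) = 0)
    (hpos : ∀ m, 0 < ν (e m)) (htot : 0 < ν Set.univ)
    (θ : ℝ) (hθ : ∀ m, (ν (et m)).toReal ≤ θ * (ν (e m)).toReal) :
    ∀ V : Fin M → ℝ,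
      (eLpNorm (extFun ν e et V) 2 ν).toReal
        ≤ Real.sqrt θ * (eLpNorm (elecFun ν e V) 2 ν).toReal := by
  intro V
  set a : Fin M → ℝ := fun m => V m / (ν (e m)).toReal with ha
  set f : X → ℝ := fun x => ∑ m, (et m).indicator (fun _ => a m) x with hfdef
  set g : X → ℝ := fun x => ∑ m, (e m).indicator (fun _ => a m) x with hgdef
  set T : ℝ := (ν Set.univ).toReal with hT
  have hTpos : 0 < T := ENNReal.toReal_pos htot.ne' (measure_ne_top ν _)
  set B : ℝ := ∫ y, f y ∂ν with hB
  set c : ℝ := B / T with hc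
  -- θ ≥ 0
  have hepos : ∀ m, 0 < (ν (e m)).toReal :=
    fun m => ENNReal.toReal_pos (hpos m).ne' (measure_ne_top ν _)
  have hetpos : 0 < (ν (et ⟨0, hM⟩)).toReal :=
    lt_of_lt_of_le (hepos ⟨0, hM⟩)
      (ENNReal.toReal_mono (measure_ne_top ν _) (measure_mono (hsub _)))
  have hθ0 : 0 ≤ θ := by nlinarith [hθ ⟨0, hM⟩, hepos ⟨0, hM⟩, hetpos]
  -- integrability
  have hintf : Integrable f ν :=
    integrable_finset_sum _ fun m _ => (integrable_const (a m)).indicator (hmeas' m)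
  have hintf2 : Integrable (fun x => f x ^ 2) ν := by
    have : (fun x => f x ^ 2)
        = fun x => ∑ m, (et m).indicator (fun _ => (a m) ^ 2) x := by
      funext x; exact sq_sum_ind et hdisj' a x
    rw [this]
    exact integrable_finset_sum _ fun m _ =>
      (integrable_const ((a m) ^ 2)).indicator (hmeas' m)
  -- Memℒp
  have hmemf : MemLp f 2 ν :=
    memLp_finset_sum _ fun m _ =>
      memLp_indicator_const 2 (hmeas' m) (a m) (Or.inr (measure_ne_top ν _))
  have hmemg : MemLp g 2 ν :=
    memLp_finset_sum _ fun m _ =>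
      memLp_indicator_const 2 (hmeas m) (a m) (Or.inr (measure_ne_top ν _))
  have hmemF : MemLp (extFun ν e et V) 2 ν := by
    have : extFun ν e et V = fun x => f x - c := rfl
    rw [this]
    exact hmemf.sub (memLp_const c)
  -- compute ∫ f²
  have hA : ∫ x, f x ^ 2 ∂ν = ∑ m, (a m) ^ 2 * (ν (et m)).toReal := by
    have h1 : (fun x => f x ^ 2)
        = fun x => ∑ m, (et m).indicator (fun _ => (a m) ^ 2) x := by
      funext x; exact sq_sum_ind et hdisj' a x
    rw [h1, integral_finset_sum _ fun m _ =>
      (integrable_const ((a m) ^ 2)).indicator (hmeas' m)]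
    refine Finset.sum_congr rfl fun m _ => ?_
    rw [integral_indicator_const _ (hmeas' m), smul_eq_mul, mul_comm]
    rfl
  have hG : ∫ x, g x ^ 2 ∂ν = ∑ m, (a m) ^ 2 * (ν (e m)).toReal := by
    have h1 : (fun x => g x ^ 2)
        = fun x => ∑ m, (e m).indicator (fun _ => (a m) ^ 2) x := by
      funext x; exact sq_sum_ind e hdisj a x
    rw [h1, integral_finset_sum _ fun m _ =>
      (integrable_const ((a m) ^ 2)).indicator (hmeas m)]
    refine Finset.sum_congr rfl fun m _ => ?_
    rw [integral_indicator_const _ (hmeas m), smul_eq_mul, mul_comm]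
    rfl
  -- ∫ (f - c)² = ∫ f² - B²/T ≤ ∫ f²
  have hFint : ∫ x, (f x - c) ^ 2 ∂ν = (∫ x, f x ^ 2 ∂ν) - B ^ 2 / T := by
    have h1 : (fun x => (f x - c) ^ 2)
        = fun x => (f x ^ 2 - (2 * c) * f x) + c ^ 2 := by
      funext x; ring
    have hi1 : Integrable (fun x => f x ^ 2 - 2 * c * f x) ν :=
      hintf2.sub (hintf.const_mul _)
    rw [h1, integral_add hi1 (integrable_const _),
      integral_sub hintf2 (hintf.const_mul _), integral_const_mul, integral_const]
    rw [← hB, smul_eq_mul, measureReal_def, ← hT, hc]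
    field_simp
    ring
  have hle : ∫ x, (f x - c) ^ 2 ∂ν ≤ ∫ x, f x ^ 2 ∂ν := by
    rw [hFint]
    have : 0 ≤ B ^ 2 / T := div_nonneg (sq_nonneg B) hTpos.le
    linarith
  have hAG : ∫ x, f x ^ 2 ∂ν ≤ θ * ∫ x, g x ^ 2 ∂ν := by
    rw [hA, hG, Finset.mul_sum]
    refine Finset.sum_le_sum fun m _ => ?_
    calc (a m) ^ 2 * (ν (et m)).toReal
        ≤ (a m) ^ 2 * (θ * (ν (e m)).toReal) := by
          exact mul_le_mul_of_nonneg_left (hθ m) (sq_nonneg _)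
      _ = θ * ((a m) ^ 2 * (ν (e m)).toReal) := by ring
  -- conclude
  have hEF : extFun ν e et V = fun x => f x - c := rfl
  have hEg : elecFun ν e V = g := rfl
  have hm2 : MemLp (fun x => f x - c) 2 ν := hmemf.sub (memLp_const c)
  rw [hEF, hEg, toReal_eLpNorm_two hm2, toReal_eLpNorm_two hmemg]
  calc Real.sqrt (∫ x, (f x - c) ^ 2 ∂ν)
      ≤ Real.sqrt (θ * ∫ x, g x ^ 2 ∂ν) :=
        Real.sqrt_le_sqrt (hle.trans hAG)
    _ = Real.sqrt θ * Real.sqrt (∫ x, g x ^ 2 ∂ν) := Real.sqrt_mul hθ0 _
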